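/- As the prime power q tends to infinity, γ_{q,q} := inf_{0<x<1} (1-x^q)/(1-x) · x^{-(q-1)/q} satisfies γ_{q,q} / (((2^q - 1)/2^q) · 2^{(2q-1)/q}) → 1; in particular γ_{q,q} < 4 for all q ≥ 2. -/

import Mathlib

open Filter

/-- Naslund's constant `γ_{q,q} = inf_{0<x<1} (1-x^q)/(1-x) · x^{-(q-1)/q}`. -/
noncomputable def gammaQQ (q : ℕ) : ℝ :=
  sInf ((fun x : ℝ => (1 - x ^ q) / (1 - x) * x ^ (-(((q : ℝ) - 1) / q))) '' Set.Ioo 0 1)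

namespace GammaQQAux

noncomputable def fQ (q : ℕ) (x : ℝ) : ℝ :=
  (1 - x ^ q) / (1 - x) * x ^ (-(((q : ℝ) - 1) / q))

noncomputable def LQ (q : ℕ) : ℝ :=
  min ((4 : ℝ) ^ (((q : ℝ) - 1) / q))
    (min (4 * (1 - (7/8 : ℝ) ^ q) * (1/4 : ℝ) ^ ((q : ℝ)⁻¹)) (8 * (1 - (7/8 : ℝ) ^ q)))

lemma exponent_nonpos {q : ℕ} (hq : 1 ≤ q) : -(((q : ℝ) - 1) / q) ≤ 0 := by
  have h1 : (1 : ℝ) ≤ (q : ℝ) := by exact_mod_cast hq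
  have : 0 ≤ ((q : ℝ) - 1) / q := div_nonneg (by linarith) (by linarith)
  linarith

lemma fQ_nonneg {q : ℕ} {x : ℝ} (hx : x ∈ Set.Ioo (0:ℝ) 1) : 0 ≤ fQ q x := by
  obtain ⟨hx0, hx1⟩ := hx
  have h1 : x ^ q ≤ 1 := pow_le_one₀ hx0.le hx1.le
  have h2 : (0:ℝ) < 1 - x := by linarith
  have h3 : (0:ℝ) ≤ x ^ (-(((q : ℝ) - 1) / q)) := Real.rpow_nonneg hx0.le _
  have : (0:ℝ) ≤ (1 - x ^ q) / (1 - x) := div_nonneg (by linarith) h2.le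
  exact mul_nonneg this h3

lemma bddBelow_image (q : ℕ) :
    BddBelow ((fun x : ℝ => (1 - x ^ q) / (1 - x) * x ^ (-(((q : ℝ) - 1) / q))) '' Set.Ioo 0 1) := by
  refine ⟨0, fun y hy => ?_⟩
  obtain ⟨x, hx, rfl⟩ := hy
  exact fQ_nonneg hx

lemma half_mem : (1/2 : ℝ) ∈ Set.Ioo (0:ℝ) 1 := by norm_num

lemma gammaQQ_le_half (q : ℕ) : gammaQQ q ≤ fQ q (1/2) :=
  csInf_le (bddBelow_image q) ⟨1/2, half_mem, rfl⟩

/-- Pointwise lower bound. -/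
lemma fQ_ge {q : ℕ} (hq : 1 ≤ q) {x : ℝ} (hx : x ∈ Set.Ioo (0:ℝ) 1) : LQ q ≤ fQ q x := by
  obtain ⟨hx0, hx1⟩ := hx
  have hq0 : (0:ℝ) < q := by exact_mod_cast hq
  have he : -(((q : ℝ) - 1) / q) ≤ 0 := exponent_nonpos hq
  have hxq1 : x ^ q ≤ 1 := pow_le_one₀ hx0.le hx1.le
  have h1x : (0:ℝ) < 1 - x := by linarith
  rcases le_or_gt x (1/4) with hc1 | hc1
  · -- small x
    refine le_trans (min_le_left _ _) ?_
    have hA : (1:ℝ) ≤ (1 - x ^ q) / (1 - x) := by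
      rw [le_div_iff₀ h1x]
      have : x ^ q ≤ x ^ 1 := pow_le_pow_of_le_one hx0.le hx1.le hq
      simpa using by linarith [this]
    have hB : (1/4 : ℝ) ^ (-(((q : ℝ) - 1) / q)) ≤ x ^ (-(((q : ℝ) - 1) / q)) :=
      Real.rpow_le_rpow_of_nonpos hx0 hc1 he
    have hB' : (1/4 : ℝ) ^ (-(((q : ℝ) - 1) / q)) = (4 : ℝ) ^ (((q : ℝ) - 1) / q) := by
      rw [one_div, Real.inv_rpow (by norm_num), ← Real.rpow_neg (by norm_num), neg_neg]
    have hpos : (0:ℝ) ≤ (4 : ℝ) ^ (((q : ℝ) - 1) / q) := Real.rpow_nonneg (by norm_num) _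
    calc (4 : ℝ) ^ (((q : ℝ) - 1) / q) = 1 * ((4:ℝ) ^ (((q : ℝ) - 1) / q)) := (one_mul _).symm
      _ ≤ (1 - x ^ q) / (1 - x) * x ^ (-(((q : ℝ) - 1) / q)) := by
          apply mul_le_mul hA (hB' ▸ hB) hpos (le_trans (by linarith) hA)
  · rcases le_or_gt x (7/8) with hc2 | hc2
    · -- middle x
      refine le_trans (min_le_right _ _) (le_trans (min_le_left _ _) ?_)
      have hsplit : x ^ (-(((q : ℝ) - 1) / q)) = x ^ ((q:ℝ)⁻¹) * x⁻¹ := by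
        have : -(((q : ℝ) - 1) / q) = (q:ℝ)⁻¹ + (-1) := by field_simp; ring
        rw [this, Real.rpow_add hx0, Real.rpow_neg_one]
      have hfq : fQ q x = (1 - x ^ q) * (x ^ ((q:ℝ)⁻¹)) * ((1 - x) * x)⁻¹ := by
        rw [fQ, hsplit]
        field_simp
      rw [hfq]
      have hA : 1 - (7/8:ℝ) ^ q ≤ 1 - x ^ q := by
        have : x ^ q ≤ (7/8:ℝ) ^ q := pow_le_pow_left₀ hx0.le hc2 q
        linarith
      have hB : (1/4 : ℝ) ^ ((q:ℝ)⁻¹) ≤ x ^ ((q:ℝ)⁻¹) :=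
        Real.rpow_le_rpow (by norm_num) (by linarith) (by positivity)
      have hC : (4:ℝ) ≤ ((1 - x) * x)⁻¹ := by
        have hxx : (0:ℝ) < (1 - x) * x := by nlinarith
        have hle : (1 - x) * x ≤ 1/4 := by nlinarith [sq_nonneg (x - 1/2)]
        calc (4:ℝ) = ((1:ℝ)/4)⁻¹ := by norm_num
          _ ≤ ((1 - x) * x)⁻¹ := inv_anti₀ hxx hle
      have hA0 : (0:ℝ) ≤ 1 - (7/8:ℝ)^q := by
        have : (7/8:ℝ)^q ≤ 1 := pow_le_one₀ (by norm_num) (by norm_num)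
        linarith
      have hB0 : (0:ℝ) ≤ (1/4 : ℝ) ^ ((q:ℝ)⁻¹) := Real.rpow_nonneg (by norm_num) _
      have hx14 : (0:ℝ) ≤ x ^ ((q:ℝ)⁻¹) := Real.rpow_nonneg hx0.le _
      nlinarith [mul_le_mul hA hB hB0 (by linarith), mul_le_mul
        (mul_le_mul hA hB hB0 (by linarith)) hC (by norm_num)
        (mul_nonneg (by linarith) hx14)]
    · -- x near 1
      refine le_trans (min_le_right _ _) (le_trans (min_le_right _ _) ?_)
      have hx78 : (7/8:ℝ) ≤ x := hc2.le
      have hxne : x ≠ 1 := ne_of_lt hx1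
      have hgeom : (1 - x ^ q) / (1 - x) = ∑ i ∈ Finset.range q, x ^ i := by
        rw [geom_sum_eq hxne, ← neg_div_neg_eq]
        ring_nf
      have hgeom8 : (8:ℝ) * (1 - (7/8:ℝ) ^ q) = ∑ i ∈ Finset.range q, (7/8:ℝ) ^ i := by
        rw [geom_sum_eq (by norm_num : (7/8:ℝ) ≠ 1)]
        field_simp
        ring
      have hsum : ∑ i ∈ Finset.range q, (7/8:ℝ) ^ i ≤ ∑ i ∈ Finset.range q, x ^ i :=
        Finset.sum_le_sum fun i _ => pow_le_pow_left₀ (by norm_num) hx78 i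
      have hS : (8:ℝ) * (1 - (7/8:ℝ) ^ q) ≤ (1 - x ^ q) / (1 - x) := by
        rw [hgeom, hgeom8]; exact hsum
      have hR : (1:ℝ) ≤ x ^ (-(((q : ℝ) - 1) / q)) :=
        Real.one_le_rpow_of_pos_of_le_one_of_nonpos hx0 hx1.le he
      have hS0 : (0:ℝ) ≤ (8:ℝ) * (1 - (7/8:ℝ) ^ q) := by
        have : (7/8:ℝ)^q ≤ 1 := pow_le_one₀ (by norm_num) (by norm_num)
        nlinarith
      calc (8:ℝ) * (1 - (7/8:ℝ) ^ q) = (8:ℝ) * (1 - (7/8:ℝ) ^ q) * 1 := (mul_one _).symm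
        _ ≤ (1 - x ^ q) / (1 - x) * x ^ (-(((q : ℝ) - 1) / q)) :=
            mul_le_mul hS hR zero_le_one (le_trans hS0 hS)

lemma LQ_le_gammaQQ {q : ℕ} (hq : 1 ≤ q) : LQ q ≤ gammaQQ q := by
  apply le_csInf ⟨_, Set.mem_image_of_mem _ half_mem⟩
  rintro y ⟨x, hx, rfl⟩
  exact fQ_ge hq hx

noncomputable def DQ (q : ℕ) : ℝ := ((2 ^ q - 1 : ℝ) / 2 ^ q) * (2 : ℝ) ^ ((2 * (q : ℝ) - 1) / q)

lemma fQ_half {q : ℕ} (hq : 1 ≤ q) : fQ q (1/2) = DQ q := by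
  have hq0 : (q:ℝ) ≠ 0 := by positivity
  have h1 : ((1:ℝ)/2) ^ (-(((q : ℝ) - 1) / q)) = (2:ℝ) ^ (((q : ℝ) - 1) / q) := by
    rw [one_div, Real.inv_rpow (by norm_num), ← Real.rpow_neg (by norm_num), neg_neg]
  have h2 : (2 : ℝ) ^ ((2 * (q : ℝ) - 1) / q) = 2 * (2:ℝ) ^ (((q : ℝ) - 1) / q) := by
    have : (2 * (q : ℝ) - 1) / q = 1 + ((q : ℝ) - 1) / q := by field_simp; ring
    rw [this, Real.rpow_add (by norm_num), Real.rpow_one]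
  have h2q : (0:ℝ) < 2 ^ q := by positivity
  rw [fQ, h1, DQ, h2]
  have : ((2:ℝ) ^ q - 1) / 2 ^ q = 1 - (1/2:ℝ) ^ q := by
    field_simp
    rw [mul_sub, mul_one, ← mul_pow]; norm_num
  rw [this]
  have h12 : ((1:ℝ)/2) ^ q = (1/2:ℝ)^q := rfl
  field_simp
  ring

lemma fQ_half_lt_four {q : ℕ} (hq : 2 ≤ q) : fQ q (1/2) < 4 := by
  have hq1 : (1:ℝ) ≤ (q:ℝ) := by exact_mod_cast le_trans (by norm_num) hq
  have h1 : ((1:ℝ)/2) ^ (-(((q : ℝ) - 1) / q)) = (2:ℝ) ^ (((q : ℝ) - 1) / q) := by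
    rw [one_div, Real.inv_rpow (by norm_num), ← Real.rpow_neg (by norm_num), neg_neg]
  have hexp : ((q : ℝ) - 1) / q < 1 := by
    rw [div_lt_one (by linarith)]; linarith
  have hB : (2:ℝ) ^ (((q : ℝ) - 1) / q) < 2 := by
    calc (2:ℝ) ^ (((q : ℝ) - 1) / q) < 2 ^ (1:ℝ) :=
          Real.rpow_lt_rpow_of_exponent_lt one_lt_two hexp
      _ = 2 := Real.rpow_one 2
  have hB0 : (0:ℝ) < (2:ℝ) ^ (((q : ℝ) - 1) / q) := Real.rpow_pos_of_pos (by norm_num) _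
  have hA : (1 - ((1:ℝ)/2) ^ q) / (1 - 1/2) < 2 := by
    have : (0:ℝ) < (1/2:ℝ)^q := by positivity
    rw [div_lt_iff₀ (by norm_num)]
    linarith
  have hA0 : (0:ℝ) ≤ (1 - ((1:ℝ)/2) ^ q) / (1 - 1/2) := by
    have : ((1:ℝ)/2)^q ≤ 1 := pow_le_one₀ (by norm_num) (by norm_num)
    have h12 : (0:ℝ) < 1 - (1:ℝ)/2 := by norm_num
    exact div_nonneg (by linarith) h12.le
  rw [fQ, h1]
  calc (1 - ((1:ℝ)/2) ^ q) / (1 - 1/2) * (2:ℝ) ^ (((q : ℝ) - 1) / q)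
      < 2 * 2 := mul_lt_mul'' hA hB hA0 hB0.le
    _ = 4 := by norm_num

lemma gammaQQ_lt_four {q : ℕ} (hq : 2 ≤ q) : gammaQQ q < 4 :=
  lt_of_le_of_lt (gammaQQ_le_half q) (fQ_half_lt_four hq)

lemma tendsto_ratio_q : Tendsto (fun q : ℕ => ((q:ℝ) - 1) / q) atTop (nhds 1) := by
  have h : (fun q : ℕ => ((q:ℝ) - 1) / q) =ᶠ[atTop] (fun q => 1 - ((q:ℝ))⁻¹) := by
    filter_upwards [eventually_ge_atTop 1] with q hq
    have : (q:ℝ) ≠ 0 := by positivity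
    field_simp
  refine Tendsto.congr' h.symm ?_
  have : Tendsto (fun q : ℕ => ((q:ℝ))⁻¹) atTop (nhds 0) := tendsto_inv_atTop_zero.comp
    tendsto_natCast_atTop_atTop
  simpa using tendsto_const_nhds.sub this

lemma tendsto_inv_nat : Tendsto (fun q : ℕ => ((q:ℝ))⁻¹) atTop (nhds 0) :=
  tendsto_inv_atTop_zero.comp tendsto_natCast_atTop_atTop

lemma tendsto_seven_eighth : Tendsto (fun q : ℕ => (7/8:ℝ) ^ q) atTop (nhds 0) :=
  tendsto_pow_atTop_nhds_zero_of_lt_one (by norm_num) (by norm_num)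

lemma tendsto_LQ : Tendsto LQ atTop (nhds 4) := by
  have t1 : Tendsto (fun q : ℕ => (4 : ℝ) ^ (((q : ℝ) - 1) / q)) atTop (nhds 4) := by
    have := (Real.continuousAt_const_rpow (a := (4:ℝ)) (b := 1) (by norm_num)).tendsto.comp
      tendsto_ratio_q
    simpa [Function.comp_def] using this
  have t2 : Tendsto (fun q : ℕ => 4 * (1 - (7/8 : ℝ) ^ q) * (1/4 : ℝ) ^ ((q : ℝ)⁻¹))
      atTop (nhds 4) := by
    have ta : Tendsto (fun q : ℕ => 4 * (1 - (7/8 : ℝ) ^ q)) atTop (nhds 4) := by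
      have := (tendsto_const_nhds (x := (1:ℝ))).sub tendsto_seven_eighth
      have := (tendsto_const_nhds (x := (4:ℝ))).mul this
      simpa using this
    have tb : Tendsto (fun q : ℕ => (1/4 : ℝ) ^ ((q : ℝ)⁻¹)) atTop (nhds 1) := by
      have := (Real.continuousAt_const_rpow (a := (1/4:ℝ)) (b := 0) (by norm_num)).tendsto.comp
        tendsto_inv_nat
      simpa [Function.comp_def] using this
    simpa using ta.mul tb
  have t3 : Tendsto (fun q : ℕ => 8 * (1 - (7/8 : ℝ) ^ q)) atTop (nhds 8) := by
    have := (tendsto_const_nhds (x := (8:ℝ))).mul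
      ((tendsto_const_nhds (x := (1:ℝ))).sub tendsto_seven_eighth)
    simpa using this
  have h := t1.min (t2.min t3)
  have h48 : min (4:ℝ) (min 4 8) = 4 := by norm_num
  rw [← h48]
  exact h

lemma tendsto_DQ : Tendsto DQ atTop (nhds 4) := by
  have t1 : Tendsto (fun q : ℕ => ((2:ℝ) ^ q - 1) / 2 ^ q) atTop (nhds 1) := by
    have heq : ∀ q : ℕ, ((2:ℝ) ^ q - 1) / 2 ^ q = 1 - (1/2:ℝ) ^ q := by
      intro q
      have : (0:ℝ) < 2 ^ q := by positivity
      field_simp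
      rw [mul_sub, mul_one, ← mul_pow]; norm_num
    simp only [heq]
    have := (tendsto_const_nhds (x := (1:ℝ))).sub
      (tendsto_pow_atTop_nhds_zero_of_lt_one (by norm_num : (0:ℝ) ≤ 1/2) (by norm_num))
    simpa using this
  have t2 : Tendsto (fun q : ℕ => (2 : ℝ) ^ ((2 * (q : ℝ) - 1) / q)) atTop (nhds 4) := by
    have texp : Tendsto (fun q : ℕ => (2 * (q : ℝ) - 1) / q) atTop (nhds 2) := by
      have h : (fun q : ℕ => (2 * (q : ℝ) - 1) / q) =ᶠ[atTop] (fun q => 2 - ((q:ℝ))⁻¹) := by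
        filter_upwards [eventually_ge_atTop 1] with q hq
        have : (q:ℝ) ≠ 0 := by positivity
        field_simp
      refine Tendsto.congr' h.symm ?_
      simpa using (tendsto_const_nhds (x := (2:ℝ))).sub tendsto_inv_nat
    have := (Real.continuousAt_const_rpow (a := (2:ℝ)) (b := 2) (by norm_num)).tendsto.comp texp
    have h4 : (2:ℝ) ^ (2:ℝ) = 4 := by
      rw [show (2:ℝ) = ((2:ℕ):ℝ) by norm_num, Real.rpow_natCast]; norm_num
    simpa [h4, Function.comp_def] using this
  have h := t1.mul t2; rw [one_mul] at h; exact h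

lemma DQ_pos {q : ℕ} (hq : 1 ≤ q) : 0 < DQ q := by
  have h1 : (1:ℝ) < 2 ^ q := one_lt_pow₀ (by norm_num) (by omega)
  have h2 : (0:ℝ) < 2 ^ q := by positivity
  have h3 : (0:ℝ) < (2 : ℝ) ^ ((2 * (q : ℝ) - 1) / q) := Real.rpow_pos_of_pos (by norm_num) _
  exact mul_pos (div_pos (by linarith) h2) h3

end GammaQQAux

/-- As the prime power `q → ∞`, `γ_{q,q} ∼ ((2^q - 1)/2^q)·2^{(2q-1)/q}`; in particular
`γ_{q,q} < 4` for all `q ≥ 2`. -/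
theorem gammaQQ_asymptotic :
    Tendsto (fun q : ℕ =>
        gammaQQ q / (((2 ^ q - 1 : ℝ) / 2 ^ q) * (2 : ℝ) ^ ((2 * (q : ℝ) - 1) / q)))
      (atTop ⊓ 𝓟 {q : ℕ | IsPrimePow q}) (nhds 1) ∧
    ∀ q : ℕ, 2 ≤ q → gammaQQ q < 4 := by
  open GammaQQAux in
  constructor
  · have key : Tendsto (fun q : ℕ => gammaQQ q / DQ q) atTop (nhds 1) := by
      have hlow : Tendsto (fun q : ℕ => LQ q / DQ q) atTop (nhds 1) := by
        have := (tendsto_LQ).div tendsto_DQ (by norm_num)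
        rw [div_self (by norm_num : (4:ℝ) ≠ 0)] at this; exact this
      refine tendsto_of_tendsto_of_tendsto_of_le_of_le' hlow tendsto_const_nhds ?_ ?_
      · filter_upwards [eventually_ge_atTop 1] with q hq
        exact div_le_div_of_nonneg_right (LQ_le_gammaQQ hq) (DQ_pos hq).le
      · filter_upwards [eventually_ge_atTop 1] with q hq
        rw [div_le_one (DQ_pos hq)]
        exact (gammaQQ_le_half q).trans_eq (fQ_half hq)
    exact (key.mono_left inf_le_left)
  · intro q hq
    exact gammaQQ_lt_four hq
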